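/- Let A₁,…,A_d be n×n complex Hermitian matrices, b ∈ ℝ^d, a ∈ ℂ^d, and fix s ∈ {1,…,d}. For t in a real neighborhood of 0 set a(t) := a + t·e_s (e_s the s-th standard basis vector), P(t) := ∑_{j=1}^d a(t)_j A_j and A(t) := ∑_{j=1}^d (b_j − a(t)_j − conj(a(t)_j)) A_j, and write P := P(0), A := A(0). Let t ↦ X(t) be a family of n×n complex matrices, differentiable at t = 0, with operator norm ‖X(t)‖ < 1 for all t, satisfying the matrix equation P(t)·X(t)² + A(t)·X(t) + conj-transpose(P(t)) = 0 for all t. Assume A and I + A⁻¹PX are invertible, where X := X(0), and that ‖(I + A⁻¹PX)⁻¹A⁻¹P‖·‖X‖ < 1. Then the derivative X′(0) is given by the absolutely convergent series X′(0) = ∑_{r=0}^∞ (−1)^{r+1} · ( (I + A⁻¹PX)⁻¹A⁻¹P )^r · (I + A⁻¹PX)⁻¹ · A⁻¹ · A_s · (I − X)² · X^r. -/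

import Mathlib

open Matrix
open scoped Matrix.Norms.L2Operator

noncomputable section

/-- `P(a) = ∑_j a_j A_j`. -/
def Pmat {n d : ℕ} (A : Fin d → Matrix (Fin n) (Fin n) ℂ) (a : Fin d → ℂ) :
    Matrix (Fin n) (Fin n) ℂ :=
  ∑ j, a j • A j

/-- `A(a) = ∑_j (b_j − a_j − conj a_j) A_j`. -/
def Amat {n d : ℕ} (A : Fin d → Matrix (Fin n) (Fin n) ℂ) (b : Fin d → ℝ)
    (a : Fin d → ℂ) : Matrix (Fin n) (Fin n) ℂ :=
  ∑ j, ((b j : ℂ) - a j - (starRingEnd ℂ) (a j)) • A j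

/-- `a(t) = a + t·e_s`. -/
def aT {d : ℕ} (a : Fin d → ℂ) (s : Fin d) (t : ℝ) : Fin d → ℂ :=
  fun j => a j + (t : ℂ) * (if j = s then 1 else 0)

lemma Pmat_aT {n d : ℕ} (A : Fin d → Matrix (Fin n) (Fin n) ℂ) (a : Fin d → ℂ)
    (s : Fin d) (t : ℝ) : Pmat A (aT a s t) = Pmat A a + t • A s := by
  unfold Pmat aT
  have : (t : ℝ) • A s = ∑ j, ((t:ℂ) * if j = s then 1 else 0) • A j := by
    rw [Finset.sum_congr rfl (fun j _ => by rw [mul_ite, mul_one, mul_zero, ite_smul, zero_smul])]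
    rw [Finset.sum_ite_eq' Finset.univ s (fun j => (t:ℂ) • A j), if_pos (Finset.mem_univ s)]
    rfl
  rw [this, ← Finset.sum_add_distrib]
  exact Finset.sum_congr rfl fun j _ => by rw [add_smul]

lemma Amat_aT {n d : ℕ} (A : Fin d → Matrix (Fin n) (Fin n) ℂ) (b : Fin d → ℝ) (a : Fin d → ℂ)
    (s : Fin d) (t : ℝ) : Amat A b (aT a s t) = Amat A b a - (2*t) • A s := by
  unfold Amat aT
  have : ((2*t : ℝ)) • A s = ∑ j, (((t:ℂ) * if j = s then 1 else 0) + (starRingEnd ℂ) ((t:ℂ) * if j = s then 1 else 0)) • A j := by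
    have h1 : ∀ j : Fin d, (((t:ℂ) * if j = s then 1 else 0) + (starRingEnd ℂ) ((t:ℂ) * if j = s then 1 else 0)) • A j
        = if j = s then ((2*(t:ℂ))) • A j else 0 := by
      intro j
      by_cases h : j = s <;> simp [h, Complex.conj_ofReal] <;> ring_nf
    rw [Finset.sum_congr rfl (fun j _ => h1 j)]
    rw [Finset.sum_ite_eq' Finset.univ s (fun j => (2*(t:ℂ)) • A j), if_pos (Finset.mem_univ s)]
    have : ((2*t:ℝ):ℂ) = 2*(t:ℂ) := by push_cast; ring
    show ((2*t:ℝ):ℂ) • A s = _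
    rw [this]
  rw [this, ← Finset.sum_sub_distrib]
  refine Finset.sum_congr rfl fun j _ => ?_
  rw [← sub_smul]
  congr 1
  rw [map_add]; ring


set_option maxHeartbeats 1000000 in
/-- Lemma 2.1 of the paper: the derivative at `t = 0` of the small solution
`X(t)` of `P(t)X(t)² + A(t)X(t) + P(t)ᴴ = 0` along `a(t) = a + t e_s` is given by the
absolutely convergent series
`∑_r (−1)^{r+1} ((I + A⁻¹PX)⁻¹A⁻¹P)^r (I + A⁻¹PX)⁻¹ A⁻¹ A_s (I−X)² X^r`. -/
theorem derivative_of_small_solution_series {n d : ℕ} (s : Fin d)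
    (A : Fin d → Matrix (Fin n) (Fin n) ℂ) (hHerm : ∀ j, (A j).IsHermitian)
    (b : Fin d → ℝ) (a : Fin d → ℂ)
    (X : ℝ → Matrix (Fin n) (Fin n) ℂ) (X' : Matrix (Fin n) (Fin n) ℂ)
    (hXeq : ∀ᶠ t : ℝ in nhds 0,
      Pmat A (aT a s t) * X t ^ 2 + Amat A b (aT a s t) * X t + (Pmat A (aT a s t))ᴴ = 0)
    (hXnorm : ∀ᶠ t : ℝ in nhds 0, ‖X t‖ < 1)
    (hder : HasDerivAt X X' 0)
    (hAinv : IsUnit (Amat A b a))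
    (hBinv : IsUnit (1 + (Amat A b a)⁻¹ * Pmat A a * X 0))
    (hsmall :
      ‖(1 + (Amat A b a)⁻¹ * Pmat A a * X 0)⁻¹ * (Amat A b a)⁻¹ * Pmat A a‖ * ‖X 0‖ < 1) :
    Summable (fun r : ℕ =>
      ‖(-1 : ℂ) ^ (r + 1) •
        (((1 + (Amat A b a)⁻¹ * Pmat A a * X 0)⁻¹ * (Amat A b a)⁻¹ * Pmat A a) ^ r *
          (1 + (Amat A b a)⁻¹ * Pmat A a * X 0)⁻¹ * (Amat A b a)⁻¹ * A s *
          (1 - X 0) ^ 2 * (X 0) ^ r)‖) ∧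
    HasSum
      (fun r : ℕ =>
        (-1 : ℂ) ^ (r + 1) •
          (((1 + (Amat A b a)⁻¹ * Pmat A a * X 0)⁻¹ * (Amat A b a)⁻¹ * Pmat A a) ^ r *
            (1 + (Amat A b a)⁻¹ * Pmat A a * X 0)⁻¹ * (Amat A b a)⁻¹ * A s *
            (1 - X 0) ^ 2 * (X 0) ^ r))
      X' := by
  classical
  set P := Pmat A a with hPdef
  set Am := Amat A b a with hAmdef
  set X0 := X 0 with hX0def
  set B := (1 + Am⁻¹ * P * X0)⁻¹ with hBdef
  set C := B * Am⁻¹ * P with hCdef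
  set M0 := B * Am⁻¹ * A s * (1 - X0) ^ 2 with hM0def
  set f : ℕ → Matrix (Fin n) (Fin n) ℂ := fun r =>
    (-1 : ℂ) ^ (r + 1) • (C ^ r * B * Am⁻¹ * A s * (1 - X0) ^ 2 * X0 ^ r) with hfdef
  -- rewrite f in clean form
  have hf : ∀ r, f r = (-1 : ℂ) ^ (r + 1) • (C ^ r * M0 * X0 ^ r) := by
    intro r; simp only [hfdef, hM0def, mul_assoc]
  -- step 1: derivative equation
  have hG : HasDerivAt (fun t : ℝ => (P + t • A s) * (X t * X t) + (Am - (2*t) • A s) * X t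
        + (Pᴴ + t • A s))
      (A s * (X0 * X0) + P * (X' * X0 + X0 * X') + (-((2:ℝ) • A s) * X0 + Am * X') + A s)
      0 := by
    have h1 : HasDerivAt (fun t : ℝ => P + t • A s) (A s) 0 := by
      simpa using ((hasDerivAt_id (0:ℝ)).smul_const (A s)).const_add P
    have h3 : HasDerivAt (fun t : ℝ => Am - (2*t) • A s) (-((2:ℝ) • A s)) 0 := by
      simpa using (((hasDerivAt_id (0:ℝ)).const_mul (2:ℝ)).smul_const (A s)).const_sub Am
    have h4 : HasDerivAt (fun t : ℝ => Pᴴ + t • A s) (A s) 0 := by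
      simpa using ((hasDerivAt_id (0:ℝ)).smul_const (A s)).const_add Pᴴ
    have hE := ((h1.mul (hder.mul hder)).add (h3.mul hder)).add h4
    refine hE.congr_deriv ?_
    simp [← hX0def]
  have hG0 : HasDerivAt (fun t : ℝ => (P + t • A s) * (X t * X t) + (Am - (2*t) • A s) * X t
        + (Pᴴ + t • A s)) 0 0 := by
    refine (hasDerivAt_const (0:ℝ) (0 : Matrix (Fin n) (Fin n) ℂ)).congr_of_eventuallyEq ?_
    filter_upwards [hXeq] with t ht
    have hPT : (Pmat A (aT a s t))ᴴ = Pᴴ + t • A s := by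
      rw [Pmat_aT, conjTranspose_add, conjTranspose_smul, (hHerm s).eq]
      simp
      rfl
    rw [hPT, Pmat_aT, Amat_aT] at ht
    simpa [sq] using ht
  have hD0 : A s * (X0 * X0) + P * (X' * X0 + X0 * X') + (-((2:ℝ) • A s) * X0 + Am * X') + A s
      = 0 := hG.unique hG0
  -- step 2: algebraic rearrangement
  have key : Am * X' + P * X0 * X' + P * X' * X0 = -(A s * (1 - X0) ^ 2) := by
    have h2 : (2:ℝ) • A s = A s + A s := two_smul ℝ (A s)
    rw [h2] at hD0
    have : Am * X' + P * X0 * X' + P * X' * X0 + A s * (1 - X0) ^ 2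
        = A s * (X0 * X0) + P * (X' * X0 + X0 * X') + (-(A s + A s) * X0 + Am * X') + A s := by
      noncomm_ring
    exact eq_neg_of_add_eq_zero_left (this.trans hD0)
  have hAmInv : Am⁻¹ * Am = 1 := nonsing_inv_mul Am ((isUnit_iff_isUnit_det Am).mp hAinv)
  have hBmul : B * (1 + Am⁻¹ * P * X0) = 1 :=
    nonsing_inv_mul _ ((isUnit_iff_isUnit_det _).mp hBinv)
  have key2 : X' = -M0 - C * X' * X0 := by
    have e1 : (1 + Am⁻¹ * P * X0) * X' = -(Am⁻¹ * A s * (1 - X0) ^ 2) - Am⁻¹ * P * X' * X0 := by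
      have h := congrArg (fun Y => Am⁻¹ * Y) key
      simp only [mul_add, mul_neg, ← mul_assoc, hAmInv, one_mul] at h
      rw [add_mul, one_mul]
      exact eq_sub_of_add_eq h
    have e2 : X' = B * ((1 + Am⁻¹ * P * X0) * X') := by
      rw [← mul_assoc, hBmul, one_mul]
    conv_lhs => rw [e2, e1]
    rw [mul_sub, mul_neg]
    simp only [hM0def, hCdef, ← mul_assoc]
  clear_value P Am X0 B C M0 f
  -- step 3: summability
  have hg : ∀ r : ℕ, ‖C ^ r * M0 * X0 ^ r‖ ≤ ‖M0‖ * (‖C‖ * ‖X0‖) ^ r := by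
    intro r
    induction r with
    | zero => simp
    | succ r ih =>
      have hre : C ^ (r+1) * M0 * X0 ^ (r+1) = C * (C ^ r * M0 * X0 ^ r) * X0 := by
        rw [pow_succ' C, pow_succ X0]; simp only [mul_assoc]
      rw [hre]
      calc ‖C * (C ^ r * M0 * X0 ^ r) * X0‖
          ≤ ‖C * (C ^ r * M0 * X0 ^ r)‖ * ‖X0‖ := norm_mul_le _ _
        _ ≤ ‖C‖ * ‖C ^ r * M0 * X0 ^ r‖ * ‖X0‖ :=
            mul_le_mul_of_nonneg_right (norm_mul_le _ _) (norm_nonneg _)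
        _ ≤ ‖C‖ * (‖M0‖ * (‖C‖ * ‖X0‖) ^ r) * ‖X0‖ :=
            mul_le_mul_of_nonneg_right
              (mul_le_mul_of_nonneg_left ih (norm_nonneg _)) (norm_nonneg _)
        _ = ‖M0‖ * (‖C‖ * ‖X0‖) ^ (r+1) := by ring
  have hfn : ∀ r, ‖f r‖ = ‖C ^ r * M0 * X0 ^ r‖ := by
    intro r
    rw [hf, norm_smul]
    simp
  have hq0 : (0:ℝ) ≤ ‖C‖ * ‖X0‖ := by positivity
  have hgeo : Summable (fun r : ℕ => ‖M0‖ * (‖C‖ * ‖X0‖) ^ r) :=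
    (summable_geometric_of_lt_one hq0 hsmall).mul_left _
  have hnormsum : Summable (fun r => ‖f r‖) := by
    refine Summable.of_nonneg_of_le (fun r => norm_nonneg _) (fun r => ?_) hgeo
    rw [hfn]; exact hg r
  have hsumf : Summable f := hnormsum.of_norm
  obtain ⟨S, hS⟩ := hsumf
  -- step 4: shift relation
  have hshift : ∀ r, f (r+1) = -(C * f r * X0) := by
    intro r
    rw [hf, hf, mul_smul_comm, smul_mul_assoc, ← neg_smul]
    congr 1
    · rw [pow_succ]; ring
    · rw [pow_succ' C, pow_succ X0]; simp only [mul_assoc]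
  -- step 5: S is a fixed point
  have hCS : HasSum (fun r => C * f r * X0) (C * S * X0) :=
    (hS.mul_left C).mul_right X0
  have h1s : HasSum (fun r => f (r+1)) (S - f 0) := by
    refine (hasSum_nat_add_iff 1).mpr ?_
    rw [Finset.sum_range_one, sub_add_cancel]
    exact hS
  have h2s : HasSum (fun r => f (r+1)) (-(C * S * X0)) := by
    have h := hCS.neg
    exact h.congr_fun hshift
  have hSfix : S = -M0 - C * S * X0 := by
    have h := h1s.unique h2s
    have hf0 : f 0 = -M0 := by
      rw [hf, pow_one, pow_zero, pow_zero, one_mul, mul_one, neg_one_smul]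
    have h3 : S = -(C * S * X0) + f 0 := sub_eq_iff_eq_add.mp h
    rw [hf0] at h3
    exact h3.trans (neg_add_eq_sub _ _)
  -- step 6: X' = S
  have hXS : X' = S := by
    have hdiff : X' - S = C * (S - X') * X0 := by
      conv_lhs => rw [key2, hSfix]
      noncomm_ring
    have hb : ‖X' - S‖ ≤ (‖C‖ * ‖X0‖) * ‖X' - S‖ := by
      calc ‖X' - S‖ = ‖C * (S - X') * X0‖ := by rw [hdiff]
        _ ≤ ‖C * (S - X')‖ * ‖X0‖ := norm_mul_le _ _
        _ ≤ ‖C‖ * ‖S - X'‖ * ‖X0‖ :=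
            mul_le_mul_of_nonneg_right (norm_mul_le _ _) (norm_nonneg _)
        _ = (‖C‖ * ‖X0‖) * ‖X' - S‖ := by rw [norm_sub_rev S X']; ring
    have hnz : ‖X' - S‖ = 0 := by
      nlinarith [norm_nonneg (X' - S), hsmall, hq0]
    exact sub_eq_zero.mp (norm_eq_zero.mp hnz)
  constructor
  · have h := hnormsum
    simp only [hfdef] at h
    exact h
  · rw [hXS]
    exact hS
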